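/- Let H be a finite simple graph, q ∈ ℕ, R ⊆ V(H), and let R̄ be the closure of R under q-neighbor bootstrap percolation and Y = V(H)∖R̄. For v ∈ Y define the weight ω_R(v) = d_{R̄}(v) + d_Y(v)/2. Then e_H(R̄, Y) + e(H[Y]) = Σ_{v∈Y} ω_R(v). Consequently, if ω_R(v) ≥ q for all v ∈ Y, then e(H) ≥ q(|R̄| − |R|) + q|Y| = q·n − q|R|. -/

import Mathlib

open scoped BigOperators

open Finset

lemma card_between {V : Type*} [Fintype V] [DecidableEq V] (H : SimpleGraph V)
    [DecidableRel H.Adj] (A B : Finset V) (hd : Disjoint A B)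
    [DecidablePred (fun e : Sym2 V => ∃ a ∈ A, ∃ b ∈ B, e = s(a, b))] :
    (H.edgeFinset.filter (fun e => ∃ a ∈ A, ∃ b ∈ B, e = s(a, b))).card
      = ∑ b ∈ B, (A.filter (fun w => H.Adj b w)).card := by
  have h1 : ((B ×ˢ A).filter fun p => H.Adj p.1 p.2).card
      = ∑ b ∈ B, (A.filter fun w => H.Adj b w).card := by
    rw [Finset.card_filter, Finset.sum_product]
    simp only [← Finset.card_filter]
  rw [← h1]
  refine (Finset.card_bij (fun p _ => s(p.1, p.2)) ?_ ?_ ?_).symm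
  · rintro ⟨b, a⟩ hp
    simp only [Finset.mem_filter, Finset.mem_product] at hp
    obtain ⟨⟨hb, ha⟩, hadj⟩ := hp
    simp only [Finset.mem_filter, SimpleGraph.mem_edgeFinset, SimpleGraph.mem_edgeSet]
    exact ⟨hadj, a, ha, b, hb, Sym2.eq_swap⟩
  · rintro ⟨b, a⟩ hp ⟨b', a'⟩ hp' heq
    simp only [Finset.mem_filter, Finset.mem_product] at hp hp'
    rw [Sym2.eq_iff] at heq
    rcases heq with ⟨h1, h2⟩ | ⟨h1, h2⟩
    · simp only [Prod.mk.injEq]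
      exact ⟨h1, h2⟩
    · exact absurd hp.1.1 (Finset.disjoint_left.mp hd (show b ∈ A by rw [show b = a' from h1]; exact hp'.1.2))
  · intro e he
    simp only [Finset.mem_filter, SimpleGraph.mem_edgeFinset, SimpleGraph.mem_edgeSet] at he
    obtain ⟨hadj, a, ha, b, hb, rfl⟩ := he
    refine ⟨(b, a), ?_, Sym2.eq_swap⟩
    simp only [Finset.mem_filter, Finset.mem_product]
    exact ⟨⟨hb, ha⟩, ((SimpleGraph.mem_edgeSet H).mp hadj).symm⟩
open Finset

lemma card_inside {V : Type*} [Fintype V] [DecidableEq V] (H : SimpleGraph V)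
    [DecidableRel H.Adj] (A : Finset V)
    [DecidablePred (fun e : Sym2 V => ∀ v ∈ e, v ∈ A)] :
    2 * (H.edgeFinset.filter (fun e => ∀ v ∈ e, v ∈ A)).card
      = ∑ v ∈ A, (A.filter (fun w => H.Adj v w)).card := by
  classical
  let G : SimpleGraph V :=
    { Adj := fun v w => H.Adj v w ∧ v ∈ A ∧ w ∈ A
      symm := ⟨fun v w ⟨h, hv, hw⟩ => ⟨h.symm, hw, hv⟩⟩
      loopless := ⟨fun v ⟨h, _⟩ => H.loopless.irrefl v h⟩ }
  haveI : DecidableRel G.Adj := fun v w => instDecidableAnd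
  have hedge : G.edgeFinset = H.edgeFinset.filter (fun e => ∀ v ∈ e, v ∈ A) := by
    ext e
    induction e using Sym2.ind with
    | _ a b =>
      simp only [SimpleGraph.mem_edgeFinset, SimpleGraph.mem_edgeSet, Finset.mem_filter,
        Sym2.mem_iff, forall_eq_or_imp, forall_eq]
      exact Iff.rfl
  have hdeg : ∀ v ∈ A, G.degree v = (A.filter (fun w => H.Adj v w)).card := by
    intro v hv
    rw [SimpleGraph.degree, SimpleGraph.neighborFinset_eq_filter]
    congr 1
    ext w
    simp only [Finset.mem_filter, Finset.mem_univ, true_and]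
    change H.Adj v w ∧ v ∈ A ∧ w ∈ A ↔ _
    tauto
  have hdeg0 : ∀ v ∉ A, G.degree v = 0 := by
    intro v hv
    rw [SimpleGraph.degree, SimpleGraph.neighborFinset_eq_filter, Finset.card_eq_zero]
    ext w
    simp only [Finset.mem_filter, Finset.mem_univ, true_and, Finset.notMem_empty, iff_false]
    rintro ⟨-, hv', -⟩
    exact hv hv'
  have hsum : ∑ v, G.degree v = ∑ v ∈ A, (A.filter (fun w => H.Adj v w)).card := by
    rw [← Finset.sum_subset (Finset.subset_univ A) (fun x _ hx => hdeg0 x hx)]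
    exact Finset.sum_congr rfl hdeg
  rw [← hsum, SimpleGraph.sum_degrees_eq_twice_card_edges, hedge]
open Finset

lemma card_partition {V : Type*} [Fintype V] [DecidableEq V] (H : SimpleGraph V)
    [DecidableRel H.Adj] (Rbar : Finset V)
    [DecidablePred (fun e : Sym2 V => ∀ v ∈ e, v ∈ Rbar)]
    [DecidablePred (fun e : Sym2 V => ∃ a ∈ Rbar, ∃ b ∈ Rbarᶜ, e = s(a, b))]
    [DecidablePred (fun e : Sym2 V => ∀ v ∈ e, v ∈ Rbarᶜ)] :
    H.edgeFinset.card
      = (H.edgeFinset.filter (fun e => ∀ v ∈ e, v ∈ Rbar)).card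
        + (H.edgeFinset.filter (fun e => ∃ a ∈ Rbar, ∃ b ∈ Rbarᶜ, e = s(a, b))).card
        + (H.edgeFinset.filter (fun e => ∀ v ∈ e, v ∈ Rbarᶜ)).card := by
  classical
  have hunion : H.edgeFinset
      = (H.edgeFinset.filter (fun e => ∀ v ∈ e, v ∈ Rbar))
        ∪ (H.edgeFinset.filter (fun e => ∃ a ∈ Rbar, ∃ b ∈ Rbarᶜ, e = s(a, b)))
        ∪ (H.edgeFinset.filter (fun e => ∀ v ∈ e, v ∈ Rbarᶜ)) := by
    ext e
    induction e using Sym2.ind with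
    | _ a b =>
      simp only [Finset.mem_union, Finset.mem_filter, Sym2.mem_iff, forall_eq_or_imp,
        forall_eq, Finset.mem_compl]
      constructor
      · intro he
        by_cases ha : a ∈ Rbar <;> by_cases hb : b ∈ Rbar
        · exact Or.inl (Or.inl ⟨he, ha, hb⟩)
        · exact Or.inl (Or.inr ⟨he, a, ha, b, by simpa using hb, rfl⟩)
        · exact Or.inl (Or.inr ⟨he, b, hb, a, by simpa using ha, Sym2.eq_swap⟩)
        · exact Or.inr ⟨he, ha, hb⟩
      · rintro ((⟨he, -⟩ | ⟨he, -⟩) | ⟨he, -⟩) <;> exact he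
  have hd1 : Disjoint (H.edgeFinset.filter (fun e => ∀ v ∈ e, v ∈ Rbar))
      (H.edgeFinset.filter (fun e => ∃ a ∈ Rbar, ∃ b ∈ Rbarᶜ, e = s(a, b))) := by
    rw [Finset.disjoint_left]
    rintro e he1 he2
    simp only [Finset.mem_filter] at he1 he2
    obtain ⟨-, x, -, y, hy, rfl⟩ := he2
    exact (Finset.mem_compl.mp hy) (he1.2 y (by simp))
  have hd2 : Disjoint ((H.edgeFinset.filter (fun e => ∀ v ∈ e, v ∈ Rbar))
      ∪ (H.edgeFinset.filter (fun e => ∃ a ∈ Rbar, ∃ b ∈ Rbarᶜ, e = s(a, b))))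
      (H.edgeFinset.filter (fun e => ∀ v ∈ e, v ∈ Rbarᶜ)) := by
    rw [Finset.disjoint_left]
    rintro e he1 he2
    simp only [Finset.mem_union, Finset.mem_filter] at he1 he2
    rcases he1 with ⟨-, h⟩ | ⟨-, x, hx, y, -, rfl⟩
    · induction e using Sym2.ind with
      | _ a b => exact (Finset.mem_compl.mp (he2.2 a (by simp))) (h a (by simp))
    · exact (Finset.mem_compl.mp (he2.2 x (by simp))) hx
  conv_lhs => rw [hunion]
  rw [Finset.card_union_of_disjoint hd2, Finset.card_union_of_disjoint hd1]
open Finset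

lemma closure_count {V : Type*} [Fintype V] [DecidableEq V] (H : SimpleGraph V)
    [DecidableRel H.Adj] (q : ℕ) (Rbar : Finset V)
    (hclosed : ∀ v : V, q ≤ (Rbar.filter (fun w => H.Adj v w)).card → v ∈ Rbar) :
    ∀ (n : ℕ) (R : Finset V), R ⊆ Rbar →
      (∀ A : Finset V, R ⊆ A →
        (∀ v : V, q ≤ (A.filter (fun w => H.Adj v w)).card → v ∈ A) → Rbar ⊆ A) →
      Rbar.card - R.card = n →
      q * (Rbar.card - R.card) + (H.edgeFinset.filter (fun e => ∀ v ∈ e, v ∈ R)).card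
        ≤ (H.edgeFinset.filter (fun e => ∀ v ∈ e, v ∈ Rbar)).card := by
  classical
  intro n
  induction n with
  | zero =>
    intro R hsub hmin hn
    have hcardR : R.card ≤ Rbar.card := Finset.card_le_card hsub
    have : R = Rbar := Finset.eq_of_subset_of_card_le hsub (by omega)
    subst this
    simp [hn]
  | succ n ih =>
    intro R hsub hmin hn
    -- find v ∉ R with q ≤ d_R(v)
    have hne : ¬ (∀ v : V, q ≤ (R.filter (fun w => H.Adj v w)).card → v ∈ R) := by
      intro hcl
      have := hmin R Finset.Subset.rfl hcl
      have : Rbar = R := Finset.Subset.antisymm this hsub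
      rw [this] at hn
      omega
    push_neg at hne
    obtain ⟨v, hvq, hvR⟩ := hne
    have hvRbar : v ∈ Rbar := by
      apply hclosed
      exact le_trans hvq (Finset.card_le_card (Finset.filter_subset_filter _ hsub))
    set R' := insert v R with hR'
    have hsub' : R' ⊆ Rbar := Finset.insert_subset hvRbar hsub
    have hcard' : R'.card = R.card + 1 := Finset.card_insert_of_notMem hvR
    have hmin' : ∀ A : Finset V, R' ⊆ A →
        (∀ w : V, q ≤ (A.filter (fun u => H.Adj w u)).card → w ∈ A) → Rbar ⊆ A := by
      intro A hA hAc
      exact hmin A (Finset.Subset.trans (Finset.subset_insert v R) hA) hAc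
    have hcardR : R.card ≤ Rbar.card := Finset.card_le_card hsub
    have hcardR' : R'.card ≤ Rbar.card := Finset.card_le_card hsub'
    have hstep : (H.edgeFinset.filter (fun e => ∀ u ∈ e, u ∈ R)).card + q
        ≤ (H.edgeFinset.filter (fun e => ∀ u ∈ e, u ∈ R')).card := by
      set Ev : Finset (Sym2 V) := (R.filter (fun w => H.Adj v w)).image (fun w => s(v, w))
        with hEv
      have hEvcard : Ev.card = (R.filter (fun w => H.Adj v w)).card := by
        apply Finset.card_image_of_injOn
        intro w hw w' hw' heq
        rw [Sym2.eq_iff] at heq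
        rcases heq with ⟨-, h⟩ | ⟨h1, h2⟩
        · exact h
        · exact absurd ((Finset.mem_filter.mp hw).1) (h2 ▸ hvR)
      have hEvsub : Ev ⊆ H.edgeFinset.filter (fun e => ∀ u ∈ e, u ∈ R') := by
        intro e he
        obtain ⟨w, hw, rfl⟩ := Finset.mem_image.mp he
        obtain ⟨hwR, hadj⟩ := Finset.mem_filter.mp hw
        refine Finset.mem_filter.mpr ⟨SimpleGraph.mem_edgeFinset.mpr hadj, ?_⟩
        intro u hu
        rw [Sym2.mem_iff] at hu
        rcases hu with rfl | rfl
        · exact Finset.mem_insert_self _ _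
        · exact Finset.mem_insert_of_mem hwR
      have hdisj : Disjoint Ev (H.edgeFinset.filter (fun e => ∀ u ∈ e, u ∈ R)) := by
        rw [Finset.disjoint_left]
        rintro e he1 he2
        obtain ⟨w, hw, rfl⟩ := Finset.mem_image.mp he1
        exact hvR ((Finset.mem_filter.mp he2).2 v (by simp))
      have hsubR : H.edgeFinset.filter (fun e => ∀ u ∈ e, u ∈ R)
          ⊆ H.edgeFinset.filter (fun e => ∀ u ∈ e, u ∈ R') := by
        intro e he
        obtain ⟨h1, h2⟩ := Finset.mem_filter.mp he
        exact Finset.mem_filter.mpr ⟨h1, fun u hu => Finset.mem_insert_of_mem (h2 u hu)⟩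
      calc (H.edgeFinset.filter (fun e => ∀ u ∈ e, u ∈ R)).card + q
          ≤ (H.edgeFinset.filter (fun e => ∀ u ∈ e, u ∈ R)).card + Ev.card := by
            rw [hEvcard]; exact Nat.add_le_add_left hvq _
        _ = ((H.edgeFinset.filter (fun e => ∀ u ∈ e, u ∈ R)) ∪ Ev).card := by
            rw [Finset.card_union_of_disjoint hdisj.symm]
        _ ≤ _ := Finset.card_le_card (Finset.union_subset hsubR hEvsub)
    have hih := ih R' hsub' hmin' (by omega)
    have hmono : (H.edgeFinset.filter (fun e => ∀ u ∈ e, u ∈ R')).card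
        ≤ (H.edgeFinset.filter (fun e => ∀ u ∈ e, u ∈ Rbar)).card := by
      apply Finset.card_le_card
      intro e he
      obtain ⟨h1, h2⟩ := Finset.mem_filter.mp he
      exact Finset.mem_filter.mpr ⟨h1, fun u hu => hsub' (h2 u hu)⟩
    have hmul : q * (Rbar.card - R.card) = q * (Rbar.card - R'.card) + q := by
      rw [show Rbar.card - R.card = (Rbar.card - R'.card) + 1 by omega]
      ring
    omega

/-- with `R̄` the `q`-neighbour bootstrap percolation closure of
`R` in `H` and `Y = V(H) ∖ R̄`, the weights `ω_R(v) = d_{R̄}(v) + d_Y(v)/2`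
satisfy `e_H(R̄, Y) + e(H[Y]) = Σ_{v ∈ Y} ω_R(v)`; consequently, if
`ω_R(v) ≥ q` for every `v ∈ Y`, then `e(H) ≥ q·n − q·|R|`. -/
theorem stmt_15 {V : Type*} [Fintype V] [DecidableEq V] (H : SimpleGraph V)
    [DecidableRel H.Adj] (q : ℕ) (R Rbar : Finset V)
    (hsub : R ⊆ Rbar)
    (hclosed : ∀ v : V, q ≤ (Rbar.filter (fun w => H.Adj v w)).card → v ∈ Rbar)
    (hmin : ∀ A : Finset V, R ⊆ A →
      (∀ v : V, q ≤ (A.filter (fun w => H.Adj v w)).card → v ∈ A) → Rbar ⊆ A)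
    (Y : Finset V) (hY : Y = Rbarᶜ) :
    (({e ∈ H.edgeSet | ∃ a ∈ Rbar, ∃ b ∈ Y, e = s(a, b)}.ncard : ℚ) +
        ({e ∈ H.edgeSet | ∀ v ∈ e, (v : V) ∈ Y}.ncard : ℚ) =
      ∑ v ∈ Y, (((Rbar.filter (fun w => H.Adj v w)).card : ℚ) +
        ((Y.filter (fun w => H.Adj v w)).card : ℚ) / 2)) ∧
    ((∀ v ∈ Y, (q : ℚ) ≤ ((Rbar.filter (fun w => H.Adj v w)).card : ℚ) +
        ((Y.filter (fun w => H.Adj v w)).card : ℚ) / 2) →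
      (q : ℚ) * (Fintype.card V) - (q : ℚ) * R.card ≤ (H.edgeSet.ncard : ℚ)) := by

  classical
  subst hY
  set Y := Rbarᶜ with hY
  have hdisj : Disjoint Rbar Y := disjoint_compl_right
  -- ncard → Finset card
  have hnc1 : {e ∈ H.edgeSet | ∃ a ∈ Rbar, ∃ b ∈ Y, e = s(a, b)}.ncard
      = (H.edgeFinset.filter (fun e => ∃ a ∈ Rbar, ∃ b ∈ Y, e = s(a, b))).card := by
    rw [show {e ∈ H.edgeSet | ∃ a ∈ Rbar, ∃ b ∈ Y, e = s(a, b)}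
        = ↑(H.edgeFinset.filter (fun e => ∃ a ∈ Rbar, ∃ b ∈ Y, e = s(a, b))) by
      ext e; simp [SimpleGraph.mem_edgeFinset]]
    exact Set.ncard_coe_finset _
  have hnc2 : {e ∈ H.edgeSet | ∀ v ∈ e, (v : V) ∈ Y}.ncard
      = (H.edgeFinset.filter (fun e => ∀ v ∈ e, v ∈ Y)).card := by
    rw [show {e ∈ H.edgeSet | ∀ v ∈ e, (v : V) ∈ Y}
        = ↑(H.edgeFinset.filter (fun e => ∀ v ∈ e, v ∈ Y)) by
      ext e; simp [SimpleGraph.mem_edgeFinset]]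
    exact Set.ncard_coe_finset _
  have hb := card_between H Rbar Y hdisj
  have hi := card_inside H Y
  have part1 : (({e ∈ H.edgeSet | ∃ a ∈ Rbar, ∃ b ∈ Y, e = s(a, b)}.ncard : ℚ) +
        ({e ∈ H.edgeSet | ∀ v ∈ e, (v : V) ∈ Y}.ncard : ℚ) =
      ∑ v ∈ Y, (((Rbar.filter (fun w => H.Adj v w)).card : ℚ) +
        ((Y.filter (fun w => H.Adj v w)).card : ℚ) / 2)) := by
    rw [hnc1, hnc2, Finset.sum_add_distrib, ← Finset.sum_div]
    rw [show ∑ v ∈ Y, ((Rbar.filter (fun w => H.Adj v w)).card : ℚ)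
        = ((∑ v ∈ Y, (Rbar.filter (fun w => H.Adj v w)).card : ℕ) : ℚ) by push_cast; ring]
    rw [show ∑ v ∈ Y, ((Y.filter (fun w => H.Adj v w)).card : ℚ)
        = ((∑ v ∈ Y, (Y.filter (fun w => H.Adj v w)).card : ℕ) : ℚ) by push_cast; ring]
    rw [← hb, ← hi]
    push_cast
    ring
  refine ⟨part1, ?_⟩
  intro hω
  have hq1 := closure_count H q Rbar hclosed (Rbar.card - R.card) R hsub hmin rfl
  have hpart := card_partition H Rbar
  have hcards : Rbar.card + Y.card = Fintype.card V := by
    rw [hY]; exact Finset.card_add_card_compl Rbar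
  have hRle : R.card ≤ Rbar.card := Finset.card_le_card hsub
  have hedge : (H.edgeSet.ncard : ℚ) = (H.edgeFinset.card : ℚ) := by
    rw [← SimpleGraph.coe_edgeFinset, Set.ncard_coe_finset]
  have hsum2 : (q : ℚ) * Y.card ≤
      ∑ v ∈ Y, (((Rbar.filter (fun w => H.Adj v w)).card : ℚ) +
        ((Y.filter (fun w => H.Adj v w)).card : ℚ) / 2) := by
    calc (q : ℚ) * Y.card = ∑ _v ∈ Y, (q : ℚ) := by
          rw [Finset.sum_const, nsmul_eq_mul]; ring
      _ ≤ _ := Finset.sum_le_sum hω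
  rw [← part1, hnc1, hnc2] at hsum2
  have hq1' : (q : ℚ) * ((Rbar.card : ℚ) - (R.card : ℚ))
      ≤ ((H.edgeFinset.filter (fun e => ∀ v ∈ e, v ∈ Rbar)).card : ℚ) := by
    have h2 : ((q * (Rbar.card - R.card) : ℕ) : ℚ)
        ≤ ((H.edgeFinset.filter (fun e => ∀ v ∈ e, v ∈ Rbar)).card : ℚ) := by
      exact_mod_cast le_trans (Nat.le_add_right _ _) hq1
    rwa [Nat.cast_mul, Nat.cast_sub hRle] at h2
  have hpart' : (H.edgeFinset.card : ℚ)
      = ((H.edgeFinset.filter (fun e => ∀ v ∈ e, v ∈ Rbar)).card : ℚ)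
        + ((H.edgeFinset.filter (fun e => ∃ a ∈ Rbar, ∃ b ∈ Y, e = s(a, b))).card : ℚ)
        + ((H.edgeFinset.filter (fun e => ∀ v ∈ e, v ∈ Y)).card : ℚ) := by
    rw [hY] at *
    exact_mod_cast hpart
  have hn : ((Fintype.card V : ℚ)) = (Rbar.card : ℚ) + (Y.card : ℚ) := by
    exact_mod_cast hcards.symm
  rw [hedge, hpart', hn]
  nlinarith [hq1', hsum2]
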